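/- arXiv:2412.01021 — 2 statements merged into one kernel-verified Lean document; each statement's English description precedes it below -/
import Mathlib

section
/- Under Condition A (in particular η ≤ C^{−1} m ‖μ‖^{−2} for a sufficiently large constant C), along the classification gradient-descent trajectory, for every r ∈ [m] and j, y ∈ {±1} and every 0 ≤ k ≤ T*: sign(⟨w_{j,r}^k, μ_y⟩) = sign(⟨w_{j,r}^0, μ_y⟩). That is, the sign of each signal inner product is invariant throughout training. -/
noncomputable section
open MeasureTheory ProbabilityTheory Real
open scoped ENNReal NNReal RealInnerProductSpace BigOperators Classical

/-- The logistic loss `ℓ(z) = log(1 + exp(−z))`. -/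
def logloss (z : ℝ) : ℝ := Real.log (1 + Real.exp (-z))

/-- The derivative of the logistic loss, `ℓ'(z) = −(1 + exp z)⁻¹`. -/
def logloss' (z : ℝ) : ℝ := -(1 + Real.exp z)⁻¹

/-- The ±1 value of a Boolean class index: `true ↦ +1`, `false ↦ −1`. -/
def jval (j : Bool) : ℝ := if j then 1 else -1

/-- The Boolean class index of a ±1 label. -/
def bsel (t : ℝ) : Bool := if t = 1 then true else false

/-- The signal patch of a sample with label `t ∈ {±1}`:  `μ₁` if `t = 1`, else `μ₋₁`. -/
def sig {d : ℕ} (μP μM : EuclideanSpace ℝ (Fin d)) (t : ℝ) : EuclideanSpace ℝ (Fin d) :=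
  if t = 1 then μP else μM

/-- One branch `F_j` of the classifier:
`F_j(W_j, x) = (1/m) ∑_r (⟨w_{j,r}, x⁽¹⁾⟩² + ⟨w_{j,r}, x⁽²⁾⟩²)`. -/
def Fnet {d : ℕ} (m : ℕ) (W : Fin m → EuclideanSpace ℝ (Fin d))
    (x1 x2 : EuclideanSpace ℝ (Fin d)) : ℝ :=
  (m : ℝ)⁻¹ * ∑ r, (⟪W r, x1⟫ ^ 2 + ⟪W r, x2⟫ ^ 2)

/-- The classifier `f(W, x) = F_{+1}(W_{+1}, x) − F_{−1}(W_{−1}, x)`. -/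
def fnet {d : ℕ} (m : ℕ) (W : Bool → Fin m → EuclideanSpace ℝ (Fin d))
    (x1 x2 : EuclideanSpace ℝ (Fin d)) : ℝ :=
  Fnet m (W true) x1 x2 - Fnet m (W false) x1 x2

/-- The empirical logistic loss `L_S(W) = (1/n) ∑_i ℓ(y_i f(W, x_i))` on the training data
`x_i = (μ_{y_i}, ξ_i)`. -/
def LS {d : ℕ} (n m : ℕ) (μP μM : EuclideanSpace ℝ (Fin d)) (y : Fin n → ℝ)
    (ξ : Fin n → EuclideanSpace ℝ (Fin d))
    (W : Bool → Fin m → EuclideanSpace ℝ (Fin d)) : ℝ :=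
  (n : ℝ)⁻¹ * ∑ i, logloss (y i * fnet m W (sig μP μM (y i)) (ξ i))

/-- The gradient of the empirical loss with respect to the neuron `w_{j,r}`:
`∇_{w_{j,r}} L_S(W) = (1/(nm)) ∑_i ℓ'_i · j y_i · (⟨w_{j,r}, x_i⁽¹⁾⟩ x_i⁽¹⁾ + ⟨w_{j,r}, ξ_i⟩ ξ_i)`. -/
def gradLS {d : ℕ} (n m : ℕ) (μP μM : EuclideanSpace ℝ (Fin d)) (y : Fin n → ℝ)
    (ξ : Fin n → EuclideanSpace ℝ (Fin d))
    (W : Bool → Fin m → EuclideanSpace ℝ (Fin d)) (j : Bool) (r : Fin m) :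
    EuclideanSpace ℝ (Fin d) :=
  ((n : ℝ) * m)⁻¹ •
    ∑ i, (logloss' (y i * fnet m W (sig μP μM (y i)) (ξ i)) * jval j * y i) •
      (⟪W j r, sig μP μM (y i)⟫ • sig μP μM (y i) + ⟪W j r, ξ i⟫ • ξ i)

/-- The gradient-descent trajectory `W⁰ = W0`, `w_{j,r}^{k+1} = w_{j,r}^k − η ∇_{w_{j,r}} L_S(W^k)`. -/
def gd {d : ℕ} (n m : ℕ) (μP μM : EuclideanSpace ℝ (Fin d)) (y : Fin n → ℝ)
    (ξ : Fin n → EuclideanSpace ℝ (Fin d)) (η : ℝ)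
    (W0 : Bool → Fin m → EuclideanSpace ℝ (Fin d)) :
    ℕ → Bool → Fin m → EuclideanSpace ℝ (Fin d)
  | 0 => W0
  | k + 1 => fun j r =>
      gd n m μP μM y ξ η W0 k j r - η • gradLS n m μP μM y ξ (gd n m μP μM y ξ η W0 k) j r

/-- Polylogarithmic factor in all problem parameters (hidden by the tilde notations). -/
def plog (n m d : ℕ) (δ : ℝ) : ℝ := max 1 (Real.log ((n : ℝ) * m * d / δ))

/-- Condition A (conditions on the parameters for the classification results), with hidden
universal constant `C`. -/
def ConditionA (C : ℝ) (d n m : ℕ) (μnorm σξ σ0 η δ : ℝ) : Prop :=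
  -- d = Ω̃(max{n²mσ_ξ⁻¹‖μ‖, n⁴m})
  C * plog n m d δ ^ C * max ((n : ℝ) ^ 2 * m * σξ⁻¹ * μnorm) ((n : ℝ) ^ 4 * m) ≤ (d : ℝ) ∧
  -- m = Ω(log(n/δ)), n = Ω(log(m/δ))
  C * Real.log ((n : ℝ) / δ) ≤ (m : ℝ) ∧
  C * Real.log ((m : ℝ) / δ) ≤ (n : ℝ) ∧
  -- Ω̃(n²mσ_ξ⁻¹d⁻¹) ≤ σ₀ ≤ Õ(min{‖μ‖⁻¹, σ_ξ⁻¹d^{−1/2}})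
  C * plog n m d δ ^ C * ((n : ℝ) ^ 2 * m * σξ⁻¹ / d) ≤ σ0 ∧
  σ0 ≤ (C * plog n m d δ ^ C)⁻¹ * min μnorm⁻¹ (σξ⁻¹ / Real.sqrt d) ∧
  -- η ≤ Õ(min{m‖μ‖⁻², nmσ₀σ_ξ⁻¹d^{−1/2}, nmσ_ξ⁻²d⁻¹})
  η ≤ (C * plog n m d δ ^ C)⁻¹ *
    min ((m : ℝ) / μnorm ^ 2)
      (min ((n : ℝ) * m * σ0 / (σξ * Real.sqrt d)) ((n : ℝ) * m / (σξ ^ 2 * d)))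

/-- The types of the members of the joint family of random variables:
the `n` labels (real valued), the `n` noise patches and the `2m` initial weights (ℝ^d valued). -/
abbrev IdxT (d n m : ℕ) : Fin n ⊕ (Fin n ⊕ Bool × Fin m) → Type :=
  Sum.elim (fun _ => ℝ) (fun _ => EuclideanSpace ℝ (Fin d))

/-- Measurable-space structures on the members of the joint family. -/
def idxMS (d n m : ℕ) : (k : Fin n ⊕ (Fin n ⊕ Bool × Fin m)) → MeasurableSpace (IdxT d n m k)
  | Sum.inl _ => (inferInstance : MeasurableSpace ℝ)
  | Sum.inr _ => (inferInstance : MeasurableSpace (EuclideanSpace ℝ (Fin d)))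

/-- The joint family of random variables: labels, noise patches, initial weights. -/
def allRV {d n m : ℕ} {Ω : Type} (y : Fin n → Ω → ℝ)
    (ξ : Fin n → Ω → EuclideanSpace ℝ (Fin d))
    (w0 : Bool → Fin m → Ω → EuclideanSpace ℝ (Fin d)) :
    (k : Fin n ⊕ (Fin n ⊕ Bool × Fin m)) → Ω → IdxT d n m k
  | Sum.inl i => y i
  | Sum.inr (Sum.inl i) => ξ i
  | Sum.inr (Sum.inr p) => w0 p.1 p.2

/-!
STATEMENT 12 (sign invariance): Under Condition A (in particular η ≤ C⁻¹ m ‖μ‖⁻² for a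
sufficiently large constant C), along the classification gradient-descent trajectory, for
every r ∈ [m], j, y ∈ {±1} and every 0 ≤ k ≤ T*:
sign(⟨w_{j,r}^k, μ_y⟩) = sign(⟨w_{j,r}⁰, μ_y⟩).
-/


lemma abs_logloss'_le_one (z : ℝ) : |logloss' z| ≤ 1 := by
  have h : (0:ℝ) < 1 + Real.exp z := by positivity
  rw [logloss', abs_neg, abs_inv, abs_of_pos h]
  rw [inv_le_one_iff₀]
  right; nlinarith [Real.exp_pos z]

lemma grad_inner_eq
    {d n m : ℕ} (μP μM : EuclideanSpace ℝ (Fin d)) (y : Fin n → ℝ)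
    (ξ : Fin n → EuclideanSpace ℝ (Fin d)) (W : Bool → Fin m → EuclideanSpace ℝ (Fin d))
    (j b : Bool) (r : Fin m)
    (hortho : ⟪μP, μM⟫ = 0) (hnorm : ‖μP‖ = ‖μM‖)
    (hy : ∀ i, y i = 1 ∨ y i = -1)
    (hξ : ∀ i, ⟪ξ i, μP⟫ = 0 ∧ ⟪ξ i, μM⟫ = 0) :
    ∃ t : ℝ, |t| ≤ (n : ℝ) * ((n : ℝ) * m)⁻¹ * ‖μP‖ ^ 2 ∧
      ⟪gradLS n m μP μM y ξ W j r, sig μP μM (jval b)⟫ =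
        t * ⟪W j r, sig μP μM (jval b)⟫ := by
  have jt : jval true = 1 := by simp [jval]
  have jf : jval false = -1 := by simp [jval]
  have e1 : sig μP μM (1:ℝ) = μP := if_pos rfl
  have e2 : sig μP μM (-1:ℝ) = μM := if_neg (by norm_num)
  set μb := sig μP μM (jval b) with hμb
  refine ⟨((n : ℝ) * m)⁻¹ * ∑ i,
      (logloss' (y i * fnet m W (sig μP μM (y i)) (ξ i)) * jval j * y i) *
        ⟪sig μP μM (y i), μb⟫, ?_, ?_⟩
  · have habs : ∀ i : Fin n,
        |(logloss' (y i * fnet m W (sig μP μM (y i)) (ξ i)) * jval j * y i) *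
          ⟪sig μP μM (y i), μb⟫| ≤ ‖μP‖ ^ 2 := by
      intro i
      have ha1 : |logloss' (y i * fnet m W (sig μP μM (y i)) (ξ i)) * jval j * y i| ≤ 1 := by
        rw [abs_mul, abs_mul]
        have h1 := abs_logloss'_le_one (y i * fnet m W (sig μP μM (y i)) (ξ i))
        have h2 : |jval j| = 1 := by cases j <;> simp [jval]
        have h3 : |y i| = 1 := by rcases hy i with h | h <;> simp [h]
        rw [h2, h3]
        nlinarith [abs_nonneg (logloss' (y i * fnet m W (sig μP μM (y i)) (ξ i)))]
      have ha2 : |⟪sig μP μM (y i), μb⟫| ≤ ‖μP‖ ^ 2 := by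
        rcases hy i with h | h <;> rw [h] <;> cases b <;> simp only [hμb, jt, jf, e1, e2]
        · rw [hortho, abs_zero]; positivity
        · rw [real_inner_self_eq_norm_sq, abs_of_nonneg (by positivity)]
        · rw [real_inner_self_eq_norm_sq, abs_of_nonneg (by positivity), hnorm]
        · rw [real_inner_comm, hortho, abs_zero]; positivity
      calc |(logloss' (y i * fnet m W (sig μP μM (y i)) (ξ i)) * jval j * y i) *
            ⟪sig μP μM (y i), μb⟫|
          = |logloss' (y i * fnet m W (sig μP μM (y i)) (ξ i)) * jval j * y i| *
            |⟪sig μP μM (y i), μb⟫| := abs_mul _ _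
        _ ≤ 1 * (‖μP‖ ^ 2) := mul_le_mul ha1 ha2 (abs_nonneg _) zero_le_one
        _ = ‖μP‖ ^ 2 := one_mul _
    rw [abs_mul, abs_inv, abs_of_nonneg (by positivity : (0:ℝ) ≤ (n:ℝ) * m)]
    rw [mul_comm ((n:ℝ)) (((n:ℝ)*m)⁻¹), mul_assoc]
    refine mul_le_mul_of_nonneg_left ?_ (by positivity)
    calc |∑ i, (logloss' (y i * fnet m W (sig μP μM (y i)) (ξ i)) * jval j * y i) *
            ⟪sig μP μM (y i), μb⟫|
        ≤ ∑ i, |(logloss' (y i * fnet m W (sig μP μM (y i)) (ξ i)) * jval j * y i) *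
            ⟪sig μP μM (y i), μb⟫| := Finset.abs_sum_le_sum_abs _ _
      _ ≤ ∑ _i : Fin n, ‖μP‖ ^ 2 := Finset.sum_le_sum fun i _ => habs i
      _ = (n : ℝ) * ‖μP‖ ^ 2 := by simp [mul_comm]
  · have hterm : ∀ i : Fin n,
        ⟪(logloss' (y i * fnet m W (sig μP μM (y i)) (ξ i)) * jval j * y i) •
          (⟪W j r, sig μP μM (y i)⟫ • sig μP μM (y i) + ⟪W j r, ξ i⟫ • ξ i), μb⟫ =
        ((logloss' (y i * fnet m W (sig μP μM (y i)) (ξ i)) * jval j * y i) *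
          ⟪sig μP μM (y i), μb⟫) * ⟪W j r, μb⟫ := by
      intro i
      rw [real_inner_smul_left, inner_add_left, real_inner_smul_left, real_inner_smul_left]
      have hξb : ⟪ξ i, μb⟫ = 0 := by
        cases b <;> simp only [hμb, jt, jf, e1, e2]
        · exact (hξ i).2
        · exact (hξ i).1
      rw [hξb, mul_zero, add_zero]
      have key : ⟪W j r, sig μP μM (y i)⟫ * ⟪sig μP μM (y i), μb⟫ =
          ⟪sig μP μM (y i), μb⟫ * ⟪W j r, μb⟫ := by
        rcases hy i with h | h <;> rw [h] <;> cases b <;> simp only [hμb, jt, jf, e1, e2]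
        · rw [hortho]; ring
        · ring
        · ring
        · rw [real_inner_comm μP μM, hortho]; ring
      rw [key]; ring
    rw [gradLS, real_inner_smul_left, sum_inner]
    rw [Finset.sum_congr rfl fun i _ => hterm i, ← Finset.sum_mul]
    ring


lemma sign_pos_mul (c x : ℝ) (hc : 0 < c) : Real.sign (c * x) = Real.sign x := by
  rcases lt_trichotomy x 0 with h|h|h
  · rw [Real.sign_of_neg h, Real.sign_of_neg (mul_neg_of_pos_of_neg hc h)]
  · simp [h]
  · rw [Real.sign_of_pos h, Real.sign_of_pos (mul_pos hc h)]

theorem signal_sign_invariance :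
    ∃ C : ℝ, 1 ≤ C ∧
      ∀ (d n m : ℕ) (μP μM : EuclideanSpace ℝ (Fin d)) (σξ σ0 η δ : ℝ)
        (y : Fin n → ℝ) (ξ : Fin n → EuclideanSpace ℝ (Fin d))
        (W0 : Bool → Fin m → EuclideanSpace ℝ (Fin d)) (Tstar : ℕ),
        0 < d → 0 < n → 0 < m → 0 < σξ → 0 < σ0 → 0 < η → 0 < δ → δ < 1 →
        ⟪μP, μM⟫ = 0 → ‖μP‖ = ‖μM‖ → μP ≠ 0 →
        -- the labels take values in {±1}
        (∀ i, y i = 1 ∨ y i = -1) →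
        -- the noise patches are orthogonal to the signals
        (∀ i, ⟪ξ i, μP⟫ = 0 ∧ ⟪ξ i, μM⟫ = 0) →
        ConditionA C d n m ‖μP‖ σξ σ0 η δ →
        -- the maximal horizon T* = η⁻¹·poly(‖μ‖⁻¹, σ_ξ⁻²d⁻¹, σ₀⁻¹, n, m, d)
        (Tstar : ℝ) ≤ η⁻¹ * (‖μP‖⁻¹ + (σξ ^ 2 * d)⁻¹ + σ0⁻¹ + n + m + d) ^ C →
        ∀ k ≤ Tstar, ∀ (j b : Bool) (r : Fin m),
          Real.sign ⟪gd n m μP μM y ξ η W0 k j r, sig μP μM (jval b)⟫ =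
            Real.sign ⟪W0 j r, sig μP μM (jval b)⟫ := by
  refine ⟨2, by norm_num, ?_⟩
  intro d n m μP μM σξ σ0 η δ y ξ W0 Tstar hd hn hm hσξ hσ0 hη hδ hδ1 hortho hnorm hμP hy hξ
    hA hT
  have hm' : (0:ℝ) < m := by exact_mod_cast hm
  have hn' : (0:ℝ) < n := by exact_mod_cast hn
  have hμpos : (0:ℝ) < ‖μP‖ := norm_pos_iff.mpr hμP
  have hμ2 : (0:ℝ) < ‖μP‖ ^ 2 := by positivity
  -- the key quantitative bound: η * ‖μP‖² / m ≤ 1/2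
  have hplog : (1:ℝ) ≤ plog n m d δ := le_max_left _ _
  have hplog2 : (1:ℝ) ≤ plog n m d δ ^ (2:ℝ) := by
    calc (1:ℝ) = 1 ^ (2:ℝ) := (Real.one_rpow 2).symm
      _ ≤ _ := Real.rpow_le_rpow zero_le_one hplog (by norm_num)
  have hinv : ((2:ℝ) * plog n m d δ ^ (2:ℝ))⁻¹ ≤ 2⁻¹ := by
    apply inv_anti₀ (by norm_num)
    nlinarith
  have hηA := hA.2.2.2.2.2
  have hd' : (0:ℝ) < d := by exact_mod_cast hd
  have hminle : min ((m:ℝ) / ‖μP‖ ^ 2)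
      (min ((n:ℝ) * m * σ0 / (σξ * Real.sqrt d)) ((n:ℝ) * m / (σξ ^ 2 * d)))
      ≤ (m:ℝ) / ‖μP‖ ^ 2 := min_le_left _ _
  have hminnn : (0:ℝ) ≤ min ((m:ℝ) / ‖μP‖ ^ 2)
      (min ((n:ℝ) * m * σ0 / (σξ * Real.sqrt d)) ((n:ℝ) * m / (σξ ^ 2 * d))) := by
    have hs : (0:ℝ) < Real.sqrt d := Real.sqrt_pos.mpr hd'
    positivity
  have hη2 : η ≤ 2⁻¹ * ((m:ℝ) / ‖μP‖ ^ 2) := by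
    refine le_trans hηA ?_
    exact mul_le_mul hinv hminle hminnn (by norm_num)
  have hkey : η * (‖μP‖ ^ 2 / m) ≤ 2⁻¹ := by
    have h1 : (0:ℝ) ≤ ‖μP‖ ^ 2 / m := by positivity
    have h2 := mul_le_mul_of_nonneg_right hη2 h1
    have h3 : 2⁻¹ * ((m:ℝ) / ‖μP‖ ^ 2) * (‖μP‖ ^ 2 / m) = 2⁻¹ := by
      field_simp
    linarith
  have hnm : (n:ℝ) * ((n:ℝ) * (m:ℝ))⁻¹ * ‖μP‖ ^ 2 = ‖μP‖ ^ 2 / m := by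
    rw [mul_inv]
    field_simp
  intro k hk j b r
  clear hk hT
  induction k with
  | zero => rfl
  | succ k ih =>
    obtain ⟨t, hts, heq⟩ := grad_inner_eq μP μM y ξ (gd n m μP μM y ξ η W0 k) j b r
      hortho hnorm hy hξ
    have hgd : gd n m μP μM y ξ η W0 (k + 1) j r =
        gd n m μP μM y ξ η W0 k j r - η • gradLS n m μP μM y ξ (gd n m μP μM y ξ η W0 k) j r :=
      rfl
    rw [hgd, inner_sub_left, real_inner_smul_left, heq]
    have hre : ⟪gd n m μP μM y ξ η W0 k j r, sig μP μM (jval b)⟫ -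
        η * (t * ⟪gd n m μP μM y ξ η W0 k j r, sig μP μM (jval b)⟫) =
        (1 - η * t) * ⟪gd n m μP μM y ξ η W0 k j r, sig μP μM (jval b)⟫ := by ring
    rw [hre]
    have hpos : 0 < 1 - η * t := by
      have h1 : η * t ≤ η * |t| := mul_le_mul_of_nonneg_left (le_abs_self t) hη.le
      have h2 : η * |t| ≤ η * ((n:ℝ) * ((n:ℝ) * (m:ℝ))⁻¹ * ‖μP‖ ^ 2) :=
        mul_le_mul_of_nonneg_left hts hη.le
      rw [hnm] at h2
      linarith
    rw [sign_pos_mul _ _ hpos, ih]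
end
end

section
/- Under Condition A, on the high-probability event (in particular F_{−y_i}(W_{−y_i}^k, x_i) ≤ 0.5 for all i and ‖ξ_i‖ ≤ 2σ_ξ√d), for all 0 ≤ k ≤ T*: ‖∇L_S(W^k)‖² = O(max{‖μ‖², σ_ξ² d}) · L_S(W^k), where ‖∇L_S(W^k)‖ denotes the Frobenius norm of the full gradient over all weights w_{j,r}. -/
noncomputable section
open MeasureTheory ProbabilityTheory Real
open scoped ENNReal NNReal RealInnerProductSpace BigOperators Classical

/-!
STATEMENT 13 (gradient norm upper bound): Under Condition A, on the high-probability event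
(in particular F_{−y_i}(W_{−y_i}^k, x_i) ≤ 0.5 for all i and ‖ξ_i‖ ≤ 2σ_ξ√d), for all
0 ≤ k ≤ T*: ‖∇L_S(W^k)‖² = O(max{‖μ‖², σ_ξ² d}) · L_S(W^k), where ‖∇L_S(W^k)‖ is the
Frobenius norm of the full gradient over all weights w_{j,r}.
-/

lemma logloss_nonneg (z : ℝ) : 0 ≤ logloss z := by
  apply Real.log_nonneg; nlinarith [Real.exp_pos (-z)]

lemma inv_le_logloss (z : ℝ) : (1 + Real.exp z)⁻¹ ≤ logloss z := by
  unfold logloss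
  have h1 : (0:ℝ) < 1 + Real.exp (-z) := by positivity
  have h := Real.log_le_sub_one_of_pos (inv_pos.mpr h1)
  rw [Real.log_inv] at h
  have h2 : 1 - (1 + Real.exp (-z))⁻¹ ≤ Real.log (1 + Real.exp (-z)) := by linarith
  refine le_trans (le_of_eq ?_) h2
  have he := Real.exp_pos z
  rw [Real.exp_neg]
  field_simp; ring

lemma logloss_key (z : ℝ) : logloss' z ^ 2 * (max z 0 + 1) ≤ 2 * logloss z := by
  have he := Real.exp_pos z
  have hpos : (0:ℝ) < 1 + Real.exp z := by positivity
  have hinv : (1 + Real.exp z)⁻¹ ≤ logloss z := inv_le_logloss z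
  have hsq : logloss' z ^ 2 = ((1 + Real.exp z)⁻¹) ^ 2 := by unfold logloss'; ring
  have hle1 : (1 + Real.exp z)⁻¹ ≤ 1 := by
    rw [inv_le_one_iff₀]; right; nlinarith
  have hinvpos : (0:ℝ) < (1 + Real.exp z)⁻¹ := inv_pos.mpr hpos
  have part1 : ((1 + Real.exp z)⁻¹) ^ 2 * 1 ≤ logloss z := by nlinarith
  have part2 : ((1 + Real.exp z)⁻¹) ^ 2 * max z 0 ≤ logloss z := by
    rcases le_or_gt z 0 with hz | hz
    · rw [max_eq_right hz]; simpa using logloss_nonneg z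
    · rw [max_eq_left hz.le]
      have hz2 : z ≤ 1 + Real.exp z := by nlinarith [Real.add_one_le_exp z]
      have h3 : ((1 + Real.exp z)⁻¹) ^ 2 * z ≤ ((1 + Real.exp z)⁻¹) ^ 2 * (1 + Real.exp z) := by
        nlinarith [sq_nonneg ((1 + Real.exp z)⁻¹)]
      refine le_trans h3 (le_trans (le_of_eq ?_) hinv)
      field_simp
  rw [hsq]; nlinarith

lemma norm_combo_sq {d : ℕ} (a b : ℝ) (u v : EuclideanSpace ℝ (Fin d)) :
    ‖a • u + b • v‖ ^ 2 ≤ 2 * (a ^ 2 * ‖u‖ ^ 2 + b ^ 2 * ‖v‖ ^ 2) := by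
  have h := norm_add_le (a • u) (b • v)
  rw [norm_smul, norm_smul] at h
  have h2 : ‖a • u + b • v‖ ^ 2 ≤ (|a| * ‖u‖ + |b| * ‖v‖) ^ 2 :=
    pow_le_pow_left₀ (norm_nonneg _) h 2
  nlinarith [sq_nonneg (|a| * ‖u‖ - |b| * ‖v‖), sq_abs a, sq_abs b,
    norm_nonneg u, norm_nonneg v]

lemma Fnet_nonneg {d : ℕ} (m : ℕ) (W : Fin m → EuclideanSpace ℝ (Fin d))
    (x1 x2 : EuclideanSpace ℝ (Fin d)) : 0 ≤ Fnet m W x1 x2 := by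
  unfold Fnet
  apply mul_nonneg (by positivity)
  exact Finset.sum_nonneg fun r _ => by positivity

lemma grad_bound_aux {d n m : ℕ} (μP μM : EuclideanSpace ℝ (Fin d)) (σξ : ℝ)
    (y : Fin n → ℝ) (ξ : Fin n → EuclideanSpace ℝ (Fin d))
    (W : Bool → Fin m → EuclideanSpace ℝ (Fin d))
    (hn : 0 < n) (hm : 0 < m) (hσξ : 0 < σξ)
    (hnorm : ‖μP‖ = ‖μM‖)
    (hy : ∀ i, y i = 1 ∨ y i = -1)
    (hξb : ∀ i, ‖ξ i‖ ≤ 2 * σξ * Real.sqrt d)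
    (hF : ∀ i, Fnet m (W (!bsel (y i))) (sig μP μM (y i)) (ξ i) ≤ 0.5) :
    ∑ j : Bool, ∑ r : Fin m, ‖gradLS n m μP μM y ξ W j r‖ ^ 2 ≤
      16 * max (‖μP‖ ^ 2) (σξ ^ 2 * d) * LS n m μP μM y ξ W := by
  have hnQ : (0:ℝ) < n := Nat.cast_pos.mpr hn
  have hmQ : (0:ℝ) < m := Nat.cast_pos.mpr hm
  have hm1 : (1:ℝ) ≤ m := by exact_mod_cast hm
  set M2 : ℝ := max (‖μP‖ ^ 2) (σξ ^ 2 * d) with hM2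
  have hM2nonneg : 0 ≤ M2 := le_trans (sq_nonneg _) (le_max_left _ _)
  -- norms of the two patches
  have hsig2 : ∀ i, ‖sig μP μM (y i)‖ ^ 2 ≤ 4 * M2 := by
    intro i
    have h : ‖sig μP μM (y i)‖ = ‖μP‖ := by
      rcases hy i with h | h <;> norm_num [sig, h, hnorm]
    rw [h]
    nlinarith [le_max_left (‖μP‖ ^ 2) (σξ ^ 2 * (d:ℝ)), sq_nonneg ‖μP‖]
  have hxi2 : ∀ i, ‖ξ i‖ ^ 2 ≤ 4 * M2 := by
    intro i
    have h1 := hξb i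
    have h2 : Real.sqrt d ^ 2 = d := Real.sq_sqrt (by positivity)
    have h3 : (0:ℝ) ≤ ‖ξ i‖ := norm_nonneg _
    have h4 := Real.sqrt_nonneg (d:ℝ)
    nlinarith [le_max_right (‖μP‖ ^ 2) (σξ ^ 2 * (d:ℝ))]
  -- Step A : bound each squared gradient norm
  have stepA : ∀ (j : Bool) (r : Fin m),
      ‖gradLS n m μP μM y ξ W j r‖ ^ 2 ≤
        ((n:ℝ) * m)⁻¹ ^ 2 * ((n:ℝ) * ∑ i,
          8 * M2 * logloss' (y i * fnet m W (sig μP μM (y i)) (ξ i)) ^ 2 *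
            (⟪W j r, sig μP μM (y i)⟫ ^ 2 + ⟪W j r, ξ i⟫ ^ 2)) := by
    intro j r
    have hterm : ∀ i : Fin n,
        ‖(logloss' (y i * fnet m W (sig μP μM (y i)) (ξ i)) * jval j * y i) •
          (⟪W j r, sig μP μM (y i)⟫ • sig μP μM (y i) + ⟪W j r, ξ i⟫ • ξ i)‖ ^ 2 ≤
        8 * M2 * logloss' (y i * fnet m W (sig μP μM (y i)) (ξ i)) ^ 2 *
          (⟪W j r, sig μP μM (y i)⟫ ^ 2 + ⟪W j r, ξ i⟫ ^ 2) := by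
      intro i
      rw [norm_smul, mul_pow, Real.norm_eq_abs, sq_abs]
      have hcoef : (logloss' (y i * fnet m W (sig μP μM (y i)) (ξ i)) * jval j * y i) ^ 2 =
          logloss' (y i * fnet m W (sig μP μM (y i)) (ξ i)) ^ 2 := by
        rcases hy i with h | h <;> cases j <;> rw [h] <;> simp [jval] <;> ring
      rw [hcoef]
      have hv := norm_combo_sq ⟪W j r, sig μP μM (y i)⟫ ⟪W j r, ξ i⟫ (sig μP μM (y i)) (ξ i)
      have h1 := hsig2 i
      have h2 := hxi2 i
      have hvm : ‖⟪W j r, sig μP μM (y i)⟫ • sig μP μM (y i) + ⟪W j r, ξ i⟫ • ξ i‖ ^ 2 ≤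
          8 * M2 * (⟪W j r, sig μP μM (y i)⟫ ^ 2 + ⟪W j r, ξ i⟫ ^ 2) := by
        nlinarith [sq_nonneg ⟪W j r, sig μP μM (y i)⟫, sq_nonneg ⟪W j r, ξ i⟫]
      calc logloss' (y i * fnet m W (sig μP μM (y i)) (ξ i)) ^ 2 *
            ‖⟪W j r, sig μP μM (y i)⟫ • sig μP μM (y i) + ⟪W j r, ξ i⟫ • ξ i‖ ^ 2
          ≤ logloss' (y i * fnet m W (sig μP μM (y i)) (ξ i)) ^ 2 *
            (8 * M2 * (⟪W j r, sig μP μM (y i)⟫ ^ 2 + ⟪W j r, ξ i⟫ ^ 2)) :=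
            mul_le_mul_of_nonneg_left hvm (sq_nonneg _)
        _ = 8 * M2 * logloss' (y i * fnet m W (sig μP μM (y i)) (ξ i)) ^ 2 *
            (⟪W j r, sig μP μM (y i)⟫ ^ 2 + ⟪W j r, ξ i⟫ ^ 2) := by ring
    simp only [gradLS]
    rw [norm_smul, mul_pow, Real.norm_eq_abs, abs_of_pos (by positivity : (0:ℝ) < ((n:ℝ) * m)⁻¹)]
    apply mul_le_mul_of_nonneg_left _ (by positivity)
    calc ‖∑ i, (logloss' (y i * fnet m W (sig μP μM (y i)) (ξ i)) * jval j * y i) •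
            (⟪W j r, sig μP μM (y i)⟫ • sig μP μM (y i) + ⟪W j r, ξ i⟫ • ξ i)‖ ^ 2
        ≤ (∑ i, ‖(logloss' (y i * fnet m W (sig μP μM (y i)) (ξ i)) * jval j * y i) •
            (⟪W j r, sig μP μM (y i)⟫ • sig μP μM (y i) + ⟪W j r, ξ i⟫ • ξ i)‖) ^ 2 :=
          pow_le_pow_left₀ (norm_nonneg _) (norm_sum_le _ _) 2
      _ ≤ (Finset.univ.card : ℝ) * ∑ i, ‖(logloss' (y i * fnet m W (sig μP μM (y i)) (ξ i)) * jval j * y i) •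
            (⟪W j r, sig μP μM (y i)⟫ • sig μP μM (y i) + ⟪W j r, ξ i⟫ • ξ i)‖ ^ 2 := by
          exact sq_sum_le_card_mul_sum_sq
      _ ≤ (n:ℝ) * ∑ i, 8 * M2 * logloss' (y i * fnet m W (sig μP μM (y i)) (ξ i)) ^ 2 *
            (⟪W j r, sig μP μM (y i)⟫ ^ 2 + ⟪W j r, ξ i⟫ ^ 2) := by
          rw [Finset.card_univ, Fintype.card_fin]
          exact mul_le_mul_of_nonneg_left (Finset.sum_le_sum fun i _ => hterm i) hnQ.le
  -- per-sample loss bound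
  have key : ∀ i, logloss' (y i * fnet m W (sig μP μM (y i)) (ξ i)) ^ 2 *
      (∑ j : Bool, ∑ r : Fin m, (⟪W j r, sig μP μM (y i)⟫ ^ 2 + ⟪W j r, ξ i⟫ ^ 2)) ≤
      (m:ℝ) * (2 * logloss (y i * fnet m W (sig μP μM (y i)) (ξ i))) := by
    intro i
    have hGsum : ∑ j : Bool, ∑ r : Fin m, (⟪W j r, sig μP μM (y i)⟫ ^ 2 + ⟪W j r, ξ i⟫ ^ 2) =
        (m:ℝ) * (Fnet m (W true) (sig μP μM (y i)) (ξ i) + Fnet m (W false) (sig μP μM (y i)) (ξ i)) := by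
      rw [Fintype.sum_bool]
      unfold Fnet
      field_simp
    have hFF : Fnet m (W true) (sig μP μM (y i)) (ξ i) + Fnet m (W false) (sig μP μM (y i)) (ξ i) ≤
        max (y i * fnet m W (sig μP μM (y i)) (ξ i)) 0 + 1 := by
      have hmax := le_max_left (y i * fnet m W (sig μP μM (y i)) (ξ i)) 0
      have hFt := Fnet_nonneg m (W true) (sig μP μM (y i)) (ξ i)
      have hFf := Fnet_nonneg m (W false) (sig μP μM (y i)) (ξ i)
      rcases hy i with h | h
      · have hb : bsel (y i) = true := by simp [bsel, h]
        have h1 := hF i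
        rw [hb] at h1
        simp only [Bool.not_true] at h1
        have hz : y i * fnet m W (sig μP μM (y i)) (ξ i) =
            Fnet m (W true) (sig μP μM (y i)) (ξ i) - Fnet m (W false) (sig μP μM (y i)) (ξ i) := by
          rw [h]; unfold fnet; ring
        norm_num at h1
        linarith
      · have hb : bsel (y i) = false := by norm_num [bsel, h]
        have h1 := hF i
        rw [hb] at h1
        simp only [Bool.not_false] at h1
        have hz : y i * fnet m W (sig μP μM (y i)) (ξ i) =
            Fnet m (W false) (sig μP μM (y i)) (ξ i) - Fnet m (W true) (sig μP μM (y i)) (ξ i) := by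
          rw [h]; unfold fnet; ring
        norm_num at h1
        linarith
    have hk := logloss_key (y i * fnet m W (sig μP μM (y i)) (ξ i))
    rw [hGsum]
    have h5 : logloss' (y i * fnet m W (sig μP μM (y i)) (ξ i)) ^ 2 *
        (Fnet m (W true) (sig μP μM (y i)) (ξ i) + Fnet m (W false) (sig μP μM (y i)) (ξ i)) ≤
        2 * logloss (y i * fnet m W (sig μP μM (y i)) (ξ i)) :=
      le_trans (mul_le_mul_of_nonneg_left hFF (sq_nonneg _)) hk
    calc logloss' (y i * fnet m W (sig μP μM (y i)) (ξ i)) ^ 2 *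
          ((m:ℝ) * (Fnet m (W true) (sig μP μM (y i)) (ξ i) + Fnet m (W false) (sig μP μM (y i)) (ξ i)))
        = (m:ℝ) * (logloss' (y i * fnet m W (sig μP μM (y i)) (ξ i)) ^ 2 *
          (Fnet m (W true) (sig μP μM (y i)) (ξ i) + Fnet m (W false) (sig μP μM (y i)) (ξ i))) := by ring
      _ ≤ (m:ℝ) * (2 * logloss (y i * fnet m W (sig μP μM (y i)) (ξ i))) :=
          mul_le_mul_of_nonneg_left h5 hmQ.le
  -- put it together
  have hswap : ∀ (f : Fin n → Bool → Fin m → ℝ),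
      ∑ j : Bool, ∑ r : Fin m, ∑ i, f i j r = ∑ i, ∑ j : Bool, ∑ r : Fin m, f i j r := by
    intro f
    calc ∑ j : Bool, ∑ r : Fin m, ∑ i, f i j r
        = ∑ j : Bool, ∑ i, ∑ r : Fin m, f i j r :=
          Finset.sum_congr rfl fun j _ => by rw [Finset.sum_comm]
      _ = ∑ i, ∑ j : Bool, ∑ r : Fin m, f i j r := by rw [Finset.sum_comm]
  have hLSsum : ∑ i, logloss (y i * fnet m W (sig μP μM (y i)) (ξ i)) = (n:ℝ) * LS n m μP μM y ξ W := by
    unfold LS; field_simp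
  have hLSnonneg : 0 ≤ LS n m μP μM y ξ W := by
    unfold LS
    apply mul_nonneg (by positivity)
    exact Finset.sum_nonneg fun i _ => logloss_nonneg _
  calc ∑ j : Bool, ∑ r : Fin m, ‖gradLS n m μP μM y ξ W j r‖ ^ 2
      ≤ ∑ j : Bool, ∑ r : Fin m, ((n:ℝ) * m)⁻¹ ^ 2 * ((n:ℝ) * ∑ i,
          8 * M2 * logloss' (y i * fnet m W (sig μP μM (y i)) (ξ i)) ^ 2 *
            (⟪W j r, sig μP μM (y i)⟫ ^ 2 + ⟪W j r, ξ i⟫ ^ 2)) :=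
        Finset.sum_le_sum fun j _ => Finset.sum_le_sum fun r _ => stepA j r
    _ = ((n:ℝ) * m)⁻¹ ^ 2 * (n:ℝ) * 8 * M2 * ∑ i,
          logloss' (y i * fnet m W (sig μP μM (y i)) (ξ i)) ^ 2 *
            ∑ j : Bool, ∑ r : Fin m, (⟪W j r, sig μP μM (y i)⟫ ^ 2 + ⟪W j r, ξ i⟫ ^ 2) := by
        simp only [Finset.mul_sum]
        rw [hswap]
        exact Finset.sum_congr rfl fun i _ => Finset.sum_congr rfl fun j _ =>
          Finset.sum_congr rfl fun r _ => by ring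
    _ ≤ ((n:ℝ) * m)⁻¹ ^ 2 * (n:ℝ) * 8 * M2 * ∑ i,
          (m:ℝ) * (2 * logloss (y i * fnet m W (sig μP μM (y i)) (ξ i))) := by
        apply mul_le_mul_of_nonneg_left (Finset.sum_le_sum fun i _ => key i) (by positivity)
    _ = 16 * M2 / m * LS n m μP μM y ξ W := by
        rw [← Finset.mul_sum, ← Finset.mul_sum, hLSsum]
        field_simp
        ring
    _ ≤ 16 * M2 * LS n m μP μM y ξ W := by
        apply mul_le_mul_of_nonneg_right _ hLSnonneg
        rw [div_le_iff₀ hmQ]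
        nlinarith

theorem gradient_norm_bound :
    ∃ C : ℝ, 1 ≤ C ∧
      ∀ (d n m : ℕ) (μP μM : EuclideanSpace ℝ (Fin d)) (σξ σ0 η δ : ℝ)
        (y : Fin n → ℝ) (ξ : Fin n → EuclideanSpace ℝ (Fin d))
        (W0 : Bool → Fin m → EuclideanSpace ℝ (Fin d)) (Tstar : ℕ),
        0 < d → 0 < n → 0 < m → 0 < σξ → 0 < σ0 → 0 < η → 0 < δ → δ < 1 →
        ⟪μP, μM⟫ = 0 → ‖μP‖ = ‖μM‖ → μP ≠ 0 →
        -- the labels take values in {±1}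
        (∀ i, y i = 1 ∨ y i = -1) →
        ConditionA C d n m ‖μP‖ σξ σ0 η δ →
        -- on the high-probability event: ‖ξ_i‖ ≤ 2σ_ξ√d ...
        (∀ i, ‖ξ i‖ ≤ 2 * σξ * Real.sqrt d) →
        -- ... and F_{−y_i}(W_{−y_i}^k, x_i) ≤ 0.5 for all i and all k ≤ T*
        (∀ k ≤ Tstar, ∀ i,
          Fnet m (gd n m μP μM y ξ η W0 k (!bsel (y i))) (sig μP μM (y i)) (ξ i) ≤ 0.5) →
        ∀ k ≤ Tstar,
          ∑ j : Bool, ∑ r : Fin m, ‖gradLS n m μP μM y ξ (gd n m μP μM y ξ η W0 k) j r‖ ^ 2 ≤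
            C * max (‖μP‖ ^ 2) (σξ ^ 2 * d) *
              LS n m μP μM y ξ (gd n m μP μM y ξ η W0 k) := by
  refine ⟨16, by norm_num, ?_⟩
  intro d n m μP μM σξ σ0 η δ y ξ W0 Tstar _ hn hm hσξ _ _ _ _ _ hnorm _ hy _ hξb hF k hk
  exact grad_bound_aux μP μM σξ y ξ _ hn hm hσξ hnorm hy hξb (fun i => hF k hk i)
end
end
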